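/- Any family of classical channels {C_λ} from 𝒳 to 𝒴 (with |𝒴| = d) can be masked by the quantum isometry M|j⟩ = (1/√d)Σ_k w^{kj}|kk⟩: for all λ and all input states ρ, Tr_A[M C_λ(ρ) M†] = Tr_B[M C_λ(ρ) M†] = Tr(ρ)·1/d. -/
import Mathlib


open Matrix
open scoped ComplexOrder

noncomputable section

/-- Partial trace over the first (A) factor. -/
def ptA {dA dB : ℕ} (M : Matrix (Fin dA × Fin dB) (Fin dA × Fin dB) ℂ) :
    Matrix (Fin dB) (Fin dB) ℂ :=
  fun i j => ∑ k, M (k, i) (k, j)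

/-- Partial trace over the second (B) factor. -/
def ptB {dA dB : ℕ} (M : Matrix (Fin dA × Fin dB) (Fin dA × Fin dB) ℂ) :
    Matrix (Fin dA) (Fin dA) ℂ :=
  fun i j => ∑ k, M (i, k) (j, k)

/-- The Fourier masker `M|j⟩ = (1/√d) ∑_k w^{kj} |kk⟩`, with `w = e^{2πi/d}`. -/
def fourierMasker (d : ℕ) : Matrix (Fin d × Fin d) (Fin d) ℂ := fun p j =>
  if p.1 = p.2 then
    (1 / (Real.sqrt d : ℂ)) *
      Complex.exp (2 * Real.pi * Complex.I / d) ^ ((p.1.val + 1) * (j.val + 1))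
  else 0

/-- The classical channel `ρ ↦ ∑_{x,y} p(y|x) ⟨x|ρ|x⟩ |y⟩⟨y|`. -/
def classicalChannel {𝒳 : Type*} [Fintype 𝒳] [DecidableEq 𝒳] {d : ℕ}
    (p : 𝒳 → Fin d → ℝ) (ρ : Matrix 𝒳 𝒳 ℂ) : Matrix (Fin d) (Fin d) ℂ :=
  fun y y' => if y = y' then ∑ x, ((p x y : ℝ) : ℂ) * ρ x x else 0

theorem stmt18 {𝒳 Λ : Type*} [Fintype 𝒳] [DecidableEq 𝒳] (d : ℕ) (hd : 0 < d)
    (p : Λ → 𝒳 → Fin d → ℝ)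
    (hprob : ∀ l x, (∀ y, 0 ≤ p l x y) ∧ ∑ y, p l x y = 1) :
    ∀ (l : Λ) (ρ : Matrix 𝒳 𝒳 ℂ), ρ.PosSemidef → ρ.trace = 1 →
      ptA (fourierMasker d * classicalChannel (p l) ρ * (fourierMasker d)ᴴ) =
        (ρ.trace / d) • (1 : Matrix (Fin d) (Fin d) ℂ) ∧
      ptB (fourierMasker d * classicalChannel (p l) ρ * (fourierMasker d)ᴴ) =
        (ρ.trace / d) • (1 : Matrix (Fin d) (Fin d) ℂ) := by
  intro l ρ hpos htr
  set w : ℂ := Complex.exp (2 * Real.pi * Complex.I / d) with hwdef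
  set v : Fin d → Fin d → ℂ :=
    fun a j => (1 / (Real.sqrt d : ℂ)) * w ^ ((a.val + 1) * (j.val + 1)) with hvdef
  set c : Fin d → ℂ := fun j => ∑ x, ((p l x j : ℝ) : ℂ) * ρ x x with hcdef
  have hwconj : star w = w⁻¹ := by
    rw [hwdef, ← Complex.exp_neg, Complex.star_def, ← Complex.exp_conj]
    congr 1
    simp [Complex.conj_ofReal, map_ofNat]
    ring
  have hvv : ∀ a a' j : Fin d, a = a' → v a j * star (v a' j) = 1 / d := by
    intro a a' j h
    subst h
    have h1 : star ((1 : ℂ) / (Real.sqrt d : ℂ)) = 1 / (Real.sqrt d : ℂ) := by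
      simp [Complex.conj_ofReal]
    have h2 : w ^ ((a.val + 1) * (j.val + 1)) * star (w ^ ((a.val + 1) * (j.val + 1))) = 1 := by
      rw [star_pow, hwconj, ← mul_pow, mul_inv_cancel₀, one_pow]
      rw [hwdef]
      exact Complex.exp_ne_zero _
    have h3 : ((Real.sqrt d : ℂ)) * (Real.sqrt d : ℂ) = (d : ℂ) := by
      rw [← Complex.ofReal_mul, Real.mul_self_sqrt (Nat.cast_nonneg d)]
      norm_num
    rw [hvdef]
    simp only [star_mul', h1]
    calc (1 / (Real.sqrt d : ℂ)) * w ^ ((a.val + 1) * (j.val + 1)) *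
        (1 / (Real.sqrt d : ℂ) * star (w ^ ((a.val + 1) * (j.val + 1))))
        = (w ^ ((a.val + 1) * (j.val + 1)) * star (w ^ ((a.val + 1) * (j.val + 1)))) *
          (1 / ((Real.sqrt d : ℂ) * (Real.sqrt d : ℂ))) := by ring
      _ = 1 / d := by rw [h2, h3, one_mul]
  have hcsum : ∑ j, c j = ρ.trace := by
    rw [hcdef, Finset.sum_comm]
    simp only [← Finset.sum_mul]
    have : ∀ x : 𝒳, ∑ j, ((p l x j : ℝ) : ℂ) = 1 := by
      intro x
      rw [← Complex.ofReal_sum, (hprob l x).2, Complex.ofReal_one]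
    simp only [this, one_mul]
    rfl
  have hX : ∀ (a b a' b' : Fin d),
      (fourierMasker d * classicalChannel (p l) ρ * (fourierMasker d)ᴴ) (a, b) (a', b')
      = if a = b then (if a' = b' then ∑ j, c j * (v a j * star (v a' j)) else 0) else 0 := by
    intro a b a' b'
    simp only [Matrix.mul_apply, Matrix.conjTranspose_apply, fourierMasker, classicalChannel]
    by_cases hab : a = b
    · by_cases hab' : a' = b'
      · simp only [hab, hab', if_pos rfl, mul_ite, mul_zero,
          Finset.sum_ite_eq', Finset.mem_univ, if_true]
        apply Finset.sum_congr rfl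
        intro j _
        show (v b j * c j) * star (v b' j) = c j * (v b j * star (v b' j))
        ring
      · simp [hab, hab']
    · simp only [if_neg hab, zero_mul, Finset.sum_const_zero, zero_mul, mul_zero]
  have hS : ∀ a a' : Fin d, a = a' → ∑ j, c j * (v a j * star (v a' j)) = ρ.trace / d := by
    intro a a' h
    simp only [hvv a a' _ h]
    rw [← Finset.sum_mul, hcsum, mul_one_div]
  constructor
  · funext b b'
    simp only [ptA, hX, Matrix.smul_apply, Matrix.one_apply, smul_eq_mul]
    rw [Finset.sum_ite_eq' Finset.univ b
      (fun a => if a = b' then ∑ j, c j * (v a j * star (v a j)) else 0)]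
    simp only [Finset.mem_univ, if_true]
    by_cases hbb : b = b'
    · rw [if_pos hbb, if_pos hbb, mul_one, hS b b rfl]
    · rw [if_neg hbb, if_neg hbb, mul_zero]
  · funext b b'
    simp only [ptB, hX, Matrix.smul_apply, Matrix.one_apply, smul_eq_mul]
    rw [Finset.sum_ite_eq Finset.univ b
      (fun k => if b' = k then ∑ j, c j * (v b j * star (v b' j)) else 0)]
    simp only [Finset.mem_univ, if_true]
    by_cases hbb : b = b'
    · rw [if_pos hbb.symm, if_pos hbb, mul_one, hS b b' hbb]
    · rw [if_neg (fun h => hbb h.symm), if_neg hbb, mul_zero]
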